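/- Let G be a group with finite symmetric generating set X such that Geo(G,X) is k-locally testable for some k ≥ 1, and set N = 2k(|X|^{2k} + 1). If w is a word over X with |w| ≥ N that represents an element g of finite order in G, then there exists a word v over X with |v| < |w| that represents a conjugate of g in G. -/

import Mathlib

/-- `pre_{k-1}`, `suf_{k-1}` and `sub_k` agree: the equivalence `∼_k` on words. -/
def SimK {A : Type*} (k : ℕ) (u v : List A) : Prop :=
  u.take (k - 1) = v.take (k - 1) ∧
  u.drop (u.length - (k - 1)) = v.drop (v.length - (k - 1)) ∧
  ∀ s : List A, s.length = k → (s <:+: u ↔ s <:+: v)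

/-- A language `L` is `k`-locally testable if membership is invariant under `∼_k`. -/
def LocallyTestable {A : Type*} (k : ℕ) (L : Set (List A)) : Prop :=
  ∀ u v : List A, SimK k u v → (u ∈ L ↔ v ∈ L)

/-- The syntactic congruence of a language: `u ∼_L v` iff `sut ∈ L ↔ svt ∈ L` for all `s, t`. -/
def SynCong {A : Type*} (L : Set (List A)) (u v : List A) : Prop :=
  ∀ s t : List A, s ++ u ++ t ∈ L ↔ s ++ v ++ t ∈ L

/-- The element of `G` represented by a word over the generating set `X`. -/
def wordProd {G : Type*} [Group G] {X : Set G} (w : List X) : G :=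
  (w.map Subtype.val).prod

/-- A word over `X` is geodesic if no word representing the same element is shorter. -/
def IsGeodesic {G : Type*} [Group G] (X : Set G) (w : List X) : Prop :=
  ∀ v : List X, wordProd v = wordProd w → w.length ≤ v.length

/-- The language of all geodesic words over `X`. -/
def Geo {G : Type*} [Group G] (X : Set G) : Set (List X) :=
  {w | IsGeodesic X w}

/-- The `j`-th power of a word in the free monoid (concatenation of `j` copies). -/
def listPow {A : Type*} (w : List A) : ℕ → List A
  | 0 => []
  | n + 1 => w ++ listPow w n

/-! ### Auxiliary lemmas -/

section AuxList

variable {A : Type*}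

lemma listPow_length (w : List A) : ∀ m, (listPow w m).length = m * w.length
  | 0 => by simp [listPow]
  | m + 1 => by
      simp [listPow, listPow_length w m, Nat.succ_mul, Nat.add_comm]

lemma listPow_succ_right (w : List A) : ∀ m, listPow w (m + 1) = listPow w m ++ w
  | 0 => by simp [listPow]
  | m + 1 => by
      show w ++ listPow w (m + 1) = (w ++ listPow w m) ++ w
      rw [listPow_succ_right w m, List.append_assoc]

/-- If a word of length `k` is an infix of `a ++ b`, then it is an infix of
`a ++ b.take (k-1)` (occurrence starting inside `a`) or an infix of `b`. -/
lemma infix_split {s a b : List A} {k : ℕ} (hk : 1 ≤ k) (hs : s.length = k)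
    (h : s <:+: a ++ b) : s <:+: a ++ b.take (k - 1) ∨ s <:+: b := by
  obtain ⟨p, q, hpq⟩ := h
  by_cases hp : a.length ≤ p.length
  · right
    have h1 := congrArg (List.drop a.length) hpq
    rw [List.append_assoc, List.drop_append_of_le_length hp, List.drop_left] at h1
    exact ⟨p.drop a.length, q, by rw [List.append_assoc]; exact h1⟩
  · left
    push_neg at hp
    obtain ⟨m, hm⟩ : ∃ m, a.length + (k - 1) = (p ++ s).length + m :=
      ⟨a.length - 1 - p.length, by simp [hs]; omega⟩
    have h1 := congrArg (List.take (a.length + (k - 1))) hpq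
    rw [List.take_length_add_append] at h1
    rw [hm, List.take_length_add_append] at h1
    exact ⟨p, q.take m, h1⟩

/-- A `k`-infix of `r ++ r` is a `k`-infix of `r` or of
`suf_{k-1}(r) ++ pre_{k-1}(r)`. -/
lemma infix_double {s r : List A} {k : ℕ} (hk : 1 ≤ k) (hs : s.length = k)
    (hkr : k ≤ r.length) (h : s <:+: r ++ r) :
    s <:+: r ∨ s <:+: (r.drop (r.length - (k - 1)) ++ r.take (k - 1)) := by
  rcases infix_split hk hs h with h1 | h1
  swap
  · exact Or.inl h1
  obtain ⟨p, q, hpq⟩ := h1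
  by_cases hp : p.length + k ≤ r.length
  · left
    have hL : (p ++ s).length = p.length + k := by simp [hs]
    have h1 := congrArg (List.take (p.length + k)) hpq
    rw [← hL, List.take_left, hL, List.take_append_of_le_length hp] at h1
    -- h1 : p ++ s = r.take (p.length + k)
    refine ⟨p, r.drop (p.length + k), ?_⟩
    rw [h1, List.take_append_drop]
  · right
    push_neg at hp
    set c := r.take (k - 1) with hc
    set m := r.length - (k - 1) with hmdef
    have hmp : m ≤ p.length := by omega
    have h2 := congrArg (List.drop p.length) hpq
    rw [List.append_assoc, List.drop_left] at h2
    -- h2 : s ++ q = (r ++ c).drop p.length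
    have h3 : (r.drop m ++ c).drop (p.length - m) = (r ++ c).drop p.length := by
      rw [← List.drop_append_of_le_length (show m ≤ r.length by omega), List.drop_drop]
      congr 1
      omega
    rw [← h3] at h2
    refine ⟨(r.drop m ++ c).take (p.length - m), q, ?_⟩
    rw [List.append_assoc, h2, List.take_append_drop]

lemma infix_listPow {s r : List A} {k : ℕ} (hk : 1 ≤ k) (hs : s.length = k)
    (hkr : k ≤ r.length) : ∀ m, s <:+: listPow r m → s <:+: r ++ r := by
  intro m
  induction m with
  | zero =>
      intro h
      rw [show listPow r 0 = ([] : List A) from rfl, List.infix_nil] at h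
      rw [h] at hs
      simp at hs
      omega
  | succ m ih =>
      intro h
      rw [show listPow r (m + 1) = r ++ listPow r m from rfl] at h
      rcases infix_split hk hs h with h1 | h1
      · cases m with
        | zero =>
            rw [show listPow r 0 = ([] : List A) from rfl] at h1
            simp at h1
            exact h1.trans ⟨[], r, by simp⟩
        | succ m' =>
            rw [show listPow r (m' + 1) = r ++ listPow r m' from rfl,
              List.take_append_of_le_length (by omega : k - 1 ≤ r.length)] at h1
            refine h1.trans ⟨[], r.drop (k - 1), ?_⟩
            simp [List.append_assoc]
      · exact ih h1

end AuxList

section AuxGroup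

variable {G : Type*} [Group G] {X : Set G}

lemma wordProd_append (u v : List X) :
    wordProd (u ++ v) = wordProd u * wordProd v := by
  simp [wordProd]

lemma wordProd_listPow (r : List X) : ∀ m, wordProd (listPow r m) = (wordProd r) ^ m
  | 0 => by simp [listPow, wordProd]
  | m + 1 => by
      rw [show listPow r (m + 1) = r ++ listPow r m from rfl, wordProd_append,
        wordProd_listPow r m]
      exact (pow_succ' _ _).symm

end AuxGroup

/-- If `Geo(G,X)` is `k`-locally testable and `w` is a word of length at least
`N = 2k(|X|^{2k} + 1)` representing an element `g` of finite order, then some strictly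
shorter word represents a conjugate of `g`. -/
theorem stmt10 {G : Type*} [Group G] (X : Set G)
    (hfin : X.Finite) (hsym : ∀ x ∈ X, x⁻¹ ∈ X) (hgen : Subgroup.closure X = ⊤)
    (k : ℕ) (hk : 1 ≤ k) (hlt : LocallyTestable k (Geo X))
    (w : List X) (hw : 2 * k * (Nat.card X ^ (2 * k) + 1) ≤ w.length)
    (g : G) (hg : wordProd w = g) (hord : IsOfFinOrder g) :
    ∃ v : List X, v.length < w.length ∧ IsConj g (wordProd v) := by
  classical
  haveI := hfin.fintype
  set M := Nat.card X ^ (2 * k) with hM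
  -- index bounds for the M+1 disjoint blocks of length 2k
  have hidx : ∀ (i : Fin (M + 1)) (t : Fin (2 * k)), 2 * k * (i : ℕ) + (t : ℕ) < w.length := by
    intro i t
    have h1 : (i : ℕ) + 1 ≤ M + 1 := i.2
    have h2 : (t : ℕ) < 2 * k := t.2
    have h3 : 2 * k * ((i : ℕ) + 1) ≤ 2 * k * (M + 1) := Nat.mul_le_mul_left _ h1
    have h4 : 2 * k * (i : ℕ) + 2 * k = 2 * k * ((i : ℕ) + 1) := by ring
    omega
  have hbound : ∀ i : Fin (M + 1), 2 * k * (i : ℕ) + 2 * k ≤ w.length := by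
    intro i
    have := hidx i ⟨2 * k - 1, by omega⟩
    simp at this
    omega
  -- pigeonhole: two equal blocks
  set f : Fin (M + 1) → (Fin (2 * k) → X) :=
    fun i t => w.get ⟨2 * k * (i : ℕ) + (t : ℕ), hidx i t⟩ with hf
  obtain ⟨i, j, hij, hfij⟩ : ∃ i j, i ≠ j ∧ f i = f j := by
    apply Fintype.exists_ne_map_eq_of_card_lt f
    rw [Fintype.card_fun, Fintype.card_fin, Fintype.card_fin, ← Nat.card_eq_fintype_card]
    omega
  have hblock : ∀ i j : Fin (M + 1), f i = f j →
      (w.drop (2 * k * (i : ℕ))).take (2 * k) = (w.drop (2 * k * (j : ℕ))).take (2 * k) := by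
    intro i j hfe
    have hbi := hbound i
    have hbj := hbound j
    apply List.ext_getElem
    · simp
      omega
    · intro t h1 h2
      simp only [List.length_take, List.length_drop] at h1 h2
      rw [List.getElem_take, List.getElem_drop, List.getElem_take, List.getElem_drop]
      have := congrFun hfe ⟨t, by omega⟩
      simpa [hf, List.get_eq_getElem] using this
  have key : ∃ a b, a + 2 * k ≤ b ∧ b + 2 * k ≤ w.length ∧
      (w.drop a).take (2 * k) = (w.drop b).take (2 * k) := by
    rcases hij.lt_or_gt with h | h
    · refine ⟨2 * k * (i : ℕ), 2 * k * (j : ℕ), ?_, hbound j, hblock i j hfij⟩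
      have : 2 * k * ((i : ℕ) + 1) ≤ 2 * k * (j : ℕ) := Nat.mul_le_mul_left _ h
      have h4 : 2 * k * (i : ℕ) + 2 * k = 2 * k * ((i : ℕ) + 1) := by ring
      omega
    · refine ⟨2 * k * (j : ℕ), 2 * k * (i : ℕ), ?_, hbound i, (hblock i j hfij).symm⟩
      have : 2 * k * ((j : ℕ) + 1) ≤ 2 * k * (i : ℕ) := Nat.mul_le_mul_left _ h
      have h4 : 2 * k * (j : ℕ) + 2 * k = 2 * k * ((j : ℕ) + 1) := by ring
      omega
  obtain ⟨a, b, hab, hbl, hxx⟩ := key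
  -- decompose w = v1 ++ x ++ v2 ++ x ++ v3
  set x : List X := (w.drop a).take (2 * k) with hxdef
  set v1 : List X := w.take a with hv1
  set v2 : List X := (w.drop (a + 2 * k)).take (b - (a + 2 * k)) with hv2
  set v3 : List X := w.drop (b + 2 * k) with hv3
  have hxlen : x.length = 2 * k := by
    simp [hxdef]
    omega
  have hdecomp : w = v1 ++ x ++ v2 ++ x ++ v3 := by
    have e1 : w.drop a = x ++ w.drop (a + 2 * k) := by
      conv_lhs => rw [← List.take_append_drop (2 * k) (w.drop a)]
      rw [List.drop_drop]
    have e2 : w.drop (a + 2 * k) = v2 ++ w.drop b := by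
      conv_lhs => rw [← List.take_append_drop (b - (a + 2 * k)) (w.drop (a + 2 * k))]
      rw [List.drop_drop]
      congr 2
      omega
    have e3 : w.drop b = x ++ v3 := by
      conv_lhs => rw [← List.take_append_drop (2 * k) (w.drop b)]
      rw [List.drop_drop, ← hxx]
    calc w = v1 ++ w.drop a := (List.take_append_drop a w).symm
    _ = v1 ++ (x ++ (v2 ++ (x ++ v3))) := by rw [e1, e2, e3]
    _ = v1 ++ x ++ v2 ++ x ++ v3 := by simp [List.append_assoc]
  -- split x into two halves of length k
  set x1 : List X := x.take k with hx1
  set x2 : List X := x.drop k with hx2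
  have hx12 : x = x1 ++ x2 := (List.take_append_drop k x).symm
  have hx1len : x1.length = k := by simp [hx1, hxlen]; omega
  have hx2len : x2.length = k := by simp [hx2, hxlen]; omega
  -- the rotated word r, a conjugate of g
  set r : List X := x2 ++ v2 ++ x1 ++ x2 ++ v3 ++ v1 ++ x1 with hrdef
  have hrlen : r.length = w.length := by
    conv_rhs => rw [hdecomp, hx12]
    simp [hrdef]
    omega
  have h2kw : 2 * k ≤ w.length := by
    have : 2 * k * 1 ≤ 2 * k * (M + 1) := Nat.mul_le_mul_left _ (by omega)
    omega
  have hkr : k ≤ r.length := by omega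
  set A := wordProd v1 * wordProd x1 with hA
  have hkey : wordProd w = A * wordProd r * A⁻¹ := by
    rw [hdecomp, hx12, hrdef, hA]
    simp only [wordProd_append]
    group
  have hr : wordProd r = A⁻¹ * g * A := by
    rw [← hg, hkey]
    group
  set n := orderOf g with hn
  have hnpos : 0 < n := hord.orderOf_pos
  set u := listPow r (n + 1) with hu
  have hpu : wordProd u = wordProd r := by
    rw [hu, wordProd_listPow, hr, show (A⁻¹ * g * A : G) = A⁻¹ * g * A⁻¹⁻¹ by rw [inv_inv],
      conj_pow, pow_succ, hn, pow_orderOf_eq_one, one_mul, inv_inv]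
  -- the junction word is an infix of r
  have hJ : (r.drop (r.length - (k - 1)) ++ r.take (k - 1)) <:+: r := by
    have hy : r = (x2 ++ v2 ++ x1 ++ x2 ++ v3 ++ v1) ++ x1 := by rw [hrdef]
    have hsuf : r.drop (r.length - (k - 1)) = x1.drop 1 := by
      rw [hy]
      have : (x2 ++ v2 ++ x1 ++ x2 ++ v3 ++ v1 ++ x1).length - (k - 1)
          = (x2 ++ v2 ++ x1 ++ x2 ++ v3 ++ v1).length + 1 := by
        simp [hx1len]
        omega
      rw [this, List.drop_length_add_append]
    have hpre : r.take (k - 1) = x2.take (k - 1) := by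
      have : r = x2 ++ (v2 ++ x1 ++ x2 ++ v3 ++ v1 ++ x1) := by
        rw [hrdef]; simp [List.append_assoc]
      rw [this, List.take_append_of_le_length (by omega : k - 1 ≤ x2.length)]
    rw [hsuf, hpre]
    have h4 : (x1.drop 1 ++ x2.take (k - 1)) <:+: (x1 ++ x2) := by
      refine ⟨x1.take 1, x2.drop (k - 1), ?_⟩
      conv_rhs => rw [← List.take_append_drop 1 x1, ← List.take_append_drop (k - 1) x2]
      simp [List.append_assoc]
    have h5 : (x1 ++ x2) <:+: r := by
      refine ⟨x2 ++ v2, v3 ++ v1 ++ x1, ?_⟩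
      rw [hrdef]
      simp [List.append_assoc]
    exact h4.trans h5
  -- SimK r u
  have hsim : SimK k r u := by
    refine ⟨?_, ?_, ?_⟩
    · rw [hu, show listPow r (n + 1) = r ++ listPow r n from rfl,
        List.take_append_of_le_length (by omega : k - 1 ≤ r.length)]
    · rw [hu, listPow_succ_right]
      have : (listPow r n ++ r).length - (k - 1)
          = (listPow r n).length + (r.length - (k - 1)) := by
        simp
        omega
      rw [this, List.drop_length_add_append]
    · intro s hsl
      constructor
      · intro hsr
        refine hsr.trans ?_
        rw [hu, show listPow r (n + 1) = r ++ listPow r n from rfl]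
        exact ⟨[], listPow r n, by simp⟩
      · intro hsu
        have h2 := infix_listPow hk hsl hkr (n + 1) (hu ▸ hsu)
        rcases infix_double hk hsl hkr h2 with h3 | h3
        · exact h3
        · exact h3.trans hJ
  -- u is not geodesic, hence neither is r
  have hune : u ∉ Geo X := by
    intro hu_geo
    have hle : u.length ≤ r.length := hu_geo r hpu.symm
    have hlen_u : u.length = (n + 1) * r.length := by rw [hu, listPow_length]
    have hrpos : 0 < r.length := by
      have : 0 < 2 * k * (M + 1) := by positivity
      omega
    have : 1 * r.length < (n + 1) * r.length :=
      (Nat.mul_lt_mul_right hrpos).mpr (by omega)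
    omega
  have hrne : r ∉ Geo X := fun hr_geo => hune ((hlt r u hsim).mp hr_geo)
  simp only [Geo, Set.mem_setOf_eq, IsGeodesic] at hrne
  push_neg at hrne
  obtain ⟨z, hz1, hz2⟩ := hrne
  refine ⟨z, by omega, ?_⟩
  rw [isConj_iff]
  exact ⟨A⁻¹, by rw [inv_inv, hz1, hr]⟩
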